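/- Let G be a finite additive abelian group of order n ≥ 1, let d be a nonzero real number, let τ ∈ G, let a : G → ℂ satisfy a(−x) = a(x) for all x ∈ G, let b : G → ℂ, ξ : G → ℂ be functions, and let c, ω ∈ ℂ satisfy |c| = 1 and |ω| = 1. Suppose that for all g ∈ G: (i) ξ(τ − g) = ω c⁴ a(g) a(τ−g) · conj(ξ(g)), and (ii) conj(c) · Σ_{k∈G} b(g+k) ξ(k) = ω² c³ a(τ) · conj(ξ(g+τ)) − √n / d. Then for all g ∈ G: ω a(τ) · conj(a(g+τ) a(g)) · ξ(−g) − Σ_{k∈G} b(g+k) ξ(k) = c √n / d. -/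

import Mathlib

open Finset in
/-- Reformulation of two of Izumi's equations for the Drinfeld center of a
near-group fusion category of type `G + n`: given equations (i) and (ii) for the
triple `(ξ, τ, ω)`, the function `ξ` satisfies the linear condition used to set
up the linear system `(C(ω,τ) − B)ξ = z`. -/
theorem izumi_linear_reformulation (G : Type*) [AddCommGroup G] [Fintype G]
    (n : ℕ) (hn : n = Fintype.card G) (hn1 : 1 ≤ n)
    (d : ℝ) (hd : d ≠ 0) (τ : G)
    (a : G → ℂ) (ha : ∀ x : G, a (-x) = a x)
    (b : G → ℂ) (ξ : G → ℂ) (c ω : ℂ)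
    (hc : ‖c‖ = 1) (hω : ‖ω‖ = 1)
    (h1 : ∀ g : G, ξ (τ - g) = ω * c ^ 4 * a g * a (τ - g) * (starRingEnd ℂ) (ξ g))
    (h2 : ∀ g : G, (starRingEnd ℂ) c * ∑ k : G, b (g + k) * ξ k
      = ω ^ 2 * c ^ 3 * a τ * (starRingEnd ℂ) (ξ (g + τ))
        - (Real.sqrt n : ℂ) / (d : ℂ)) :
    ∀ g : G, ω * a τ * (starRingEnd ℂ) (a (g + τ) * a g) * ξ (-g)
      - ∑ k : G, b (g + k) * ξ k = c * (Real.sqrt n : ℂ) / (d : ℂ) := by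
  intro g
  have hcc : c * (starRingEnd ℂ) c = 1 := by
    rw [Complex.mul_conj]
    norm_cast
    rw [← Complex.sq_norm, hc]; norm_num
  have hww : ω * (starRingEnd ℂ) ω = 1 := by
    rw [Complex.mul_conj]
    norm_cast
    rw [← Complex.sq_norm, hω]; norm_num
  have hc4 : c ^ 4 * ((starRingEnd ℂ) c) ^ 4 = 1 := by
    rw [← mul_pow, hcc]; norm_num
  -- conjugate of (i) at -g
  have key : (starRingEnd ℂ) (ξ (g + τ)) =
      (starRingEnd ℂ) ω * ((starRingEnd ℂ) c) ^ 4 * (starRingEnd ℂ) (a g)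
        * (starRingEnd ℂ) (a (g + τ)) * ξ (-g) := by
    have h := congrArg (starRingEnd ℂ) (h1 (-g))
    rw [sub_neg_eq_add, ha] at h
    simp only [map_mul, map_pow, Complex.conj_conj] at h
    rw [add_comm τ g] at h
    linear_combination h
  -- multiply (ii) by c
  have hS : ∑ k : G, b (g + k) * ξ k
      = c * (ω ^ 2 * c ^ 3 * a τ * (starRingEnd ℂ) (ξ (g + τ))
        - (Real.sqrt n : ℂ) / (d : ℂ)) := by
    rw [← h2 g, ← mul_assoc, hcc, one_mul]
  rw [hS, key, map_mul]
  set e := ω * a τ * ((starRingEnd ℂ) (a (g + τ)) * (starRingEnd ℂ) (a g)) * ξ (-g) with he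
  linear_combination (-e) * hww + (-e * (ω * (starRingEnd ℂ) ω)) * hc4
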